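/- arXiv:1702.04777 — 2 statements merged into one kernel-verified Lean document; each statement's English description precedes it below -/
import Mathlib

section
/- Fix real constants μ0 > 0 and H > 0, and real numbers h, η with η + h = H. For n ≥ 1 let k_n be the unique solution k of μ0 + k·tan(k·H) = 0 in ((2n−1)π/(2H), nπ/H), and set Z_n(z) = cos(k_n(z+h))/cos(k_n H) on [−h, η]. Then for every twice continuously differentiable function F : [−h, η] → ℝ there exists a constant C > 0 (depending on F, μ0, H but not on n) such that |∫_{−h}^{η} F(z)·Z_n(z) dz| ≤ C·n^{−2} for all n ≥ 1. -/
open Real MeasureTheory intervalIntegral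

set_option maxHeartbeats 1200000 in
/-- Assertion (i) of Lemma 2 (Eq. (4.8a)): for any C² function `F` on `[−h, η]`,
`|∫ F·Zₙ| ≤ C·n⁻²`. -/
theorem integral_against_Zn_decay (μ0 H h η : ℝ) (hμ0 : 0 < μ0) (hH : 0 < H)
    (hηh : η + h = H)
    (k : ℕ → ℝ)
    (hk : ∀ n : ℕ, 1 ≤ n →
      k n ∈ Set.Ioo ((2 * (n : ℝ) - 1) * π / (2 * H)) ((n : ℝ) * π / H) ∧
      μ0 + k n * Real.tan (k n * H) = 0)
    (F : ℝ → ℝ) (hF : ContDiffOn ℝ 2 F (Set.Icc (-h) η)) :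
    ∃ C : ℝ, 0 < C ∧ ∀ n : ℕ, 1 ≤ n →
      |∫ z in (-h)..η, F z * (Real.cos (k n * (z + h)) / Real.cos (k n * H))| ≤
        C / (n : ℝ) ^ 2 := by
  have hπ : 0 < π := Real.pi_pos
  have hlt : -h < η := by linarith
  have hle : -h ≤ η := hlt.le
  have huIcc : Set.uIcc (-h) η = Set.Icc (-h) η := Set.uIcc_of_le hle
  set s : Set ℝ := Set.Icc (-h) η with hs_def
  have hsU : UniqueDiffOn ℝ s := uniqueDiffOn_Icc hlt
  set F1 : ℝ → ℝ := derivWithin F s with hF1_def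
  set F2 : ℝ → ℝ := derivWithin F1 s with hF2_def
  have hF1c : ContDiffOn ℝ 1 F1 s := hF.derivWithin hsU (by norm_num)
  have hF2cont : ContinuousOn F2 s := by
    have h2 : ContDiffOn ℝ 0 F2 s := hF1c.derivWithin hsU (by norm_num)
    exact h2.continuousOn
  have hFcont : ContinuousOn F s := hF.continuousOn
  have hF1cont : ContinuousOn F1 s := hF1c.continuousOn
  have hdF : ∀ x ∈ s, HasDerivWithinAt F (F1 x) s x := fun x hx =>
    ((hF.differentiableOn (by norm_num)) x hx).hasDerivWithinAt
  have hdF1 : ∀ x ∈ s, HasDerivWithinAt F1 (F2 x) s x := fun x hx =>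
    ((hF1c.differentiableOn (by norm_num)) x hx).hasDerivWithinAt
  obtain ⟨M, hM⟩ := isCompact_Icc.exists_bound_of_continuousOn hF2cont
  set M' : ℝ := max M 0 with hM'_def
  have hM'0 : 0 ≤ M' := le_max_right _ _
  have hM' : ∀ x ∈ s, |F2 x| ≤ M' := fun x hx => (hM x hx).trans (le_max_left _ _)
  set B : ℝ := μ0 * |F η| + |F1 η| + |F1 (-h)| + M' * H with hB_def
  have hB0 : 0 ≤ B := by
    have h1 := abs_nonneg (F η); have h2 := abs_nonneg (F1 η); have h3 := abs_nonneg (F1 (-h))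
    have h4 : 0 ≤ M' * H := mul_nonneg hM'0 hH.le
    nlinarith
  set A : ℝ := Real.sqrt (1 + μ0 ^ 2 * (2 * H / π) ^ 2) with hA_def
  have hA0 : 0 ≤ A := Real.sqrt_nonneg _
  set C : ℝ := (A * B + 1) * (2 * H / π) ^ 2 + 1 with hC_def
  have hC0 : 0 < C := by
    have h0 : 0 ≤ (A * B + 1) * (2 * H / π) ^ 2 :=
      mul_nonneg (by nlinarith) (sq_nonneg _)
    rw [hC_def]
    linarith
  refine ⟨C, hC0, ?_⟩
  intro n hn
  obtain ⟨⟨hK1, hK2⟩, heq⟩ := hk n hn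
  set K := k n with hK_def
  have hn1 : (1 : ℝ) ≤ n := by exact_mod_cast hn
  have hKpos : 0 < K := by
    have h0 : 0 < (2 * (n : ℝ) - 1) * π / (2 * H) :=
      div_pos (mul_pos (by linarith) hπ) (by linarith)
    linarith
  have hKn : (n : ℝ) * (π / (2 * H)) ≤ K := by
    have h1 : (n : ℝ) * π / (2 * H) ≤ (2 * (n : ℝ) - 1) * π / (2 * H) := by
      apply div_le_div_of_nonneg_right ?_ (by linarith)
      nlinarith
    rw [mul_div_assoc] at h1
    linarith
  have h2H : (0:ℝ) < 2 * H := by linarith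
  have hKmin : π / (2 * H) ≤ K :=
    le_trans (le_mul_of_one_le_left (div_pos hπ h2H).le hn1) hKn
  -- cos (K*H) ≠ 0
  have hcK : Real.cos (K * H) ≠ 0 := by
    intro h0
    rw [Real.tan_eq_sin_div_cos, h0, div_zero, mul_zero, add_zero] at heq
    exact hμ0.ne' heq
  have htan : Real.tan (K * H) = -μ0 / K := by
    field_simp
    linarith
  -- bound on the secant
  have hsec : (1 / Real.cos (K * H)) ^ 2 = 1 + μ0 ^ 2 / K ^ 2 := by
    have hpyth := Real.sin_sq_add_cos_sq (K * H)
    have ht : Real.sin (K * H) / Real.cos (K * H) = -μ0 / K := by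
      rw [← Real.tan_eq_sin_div_cos]; exact htan
    have hsin_eq : Real.sin (K * H) = (-μ0 / K) * Real.cos (K * H) := by
      field_simp at ht ⊢
      linarith
    have hK0 : K ≠ 0 := hKpos.ne'
    have h1 : ((-μ0 / K) * Real.cos (K * H)) ^ 2 + Real.cos (K * H) ^ 2 = 1 := by
      rw [← hsin_eq]; exact hpyth
    field_simp at h1 ⊢
    linear_combination -h1
  have hKinv : 1 / K ≤ 2 * H / π := by
    rw [div_le_div_iff₀ hKpos hπ]
    have := mul_le_mul_of_nonneg_left hKmin (by linarith : (0:ℝ) ≤ 2 * H)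
    calc 1 * π = 2 * H * (π / (2 * H)) := by field_simp
    _ ≤ 2 * H * K := this
  have hAbound : |1 / Real.cos (K * H)| ≤ A := by
    rw [← Real.sqrt_sq_eq_abs, hA_def]
    apply Real.sqrt_le_sqrt
    rw [hsec]
    have : μ0 ^ 2 / K ^ 2 ≤ μ0 ^ 2 * (2 * H / π) ^ 2 := by
      have h1 : (1 / K) ^ 2 ≤ (2 * H / π) ^ 2 :=
        pow_le_pow_left₀ (by positivity) hKinv 2
      have h2 : μ0 ^ 2 / K ^ 2 = μ0 ^ 2 * (1 / K) ^ 2 := by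
        field_simp
      rw [h2]
      exact mul_le_mul_of_nonneg_left h1 (sq_nonneg μ0)
    linarith
  -- bound on sin (K*H)
  have hsinKH : |Real.sin (K * H)| ≤ μ0 / K := by
    have hsin_eq : Real.sin (K * H) = (-μ0 / K) * Real.cos (K * H) := by
      have ht : Real.sin (K * H) / Real.cos (K * H) = -μ0 / K := by
        rw [← Real.tan_eq_sin_div_cos]; exact htan
      field_simp at ht ⊢
      linarith
    rw [hsin_eq, abs_mul, abs_div, abs_neg, abs_of_pos hμ0, abs_of_pos hKpos]
    calc μ0 / K * |Real.cos (K * H)| ≤ μ0 / K * 1 := by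
          apply mul_le_mul_of_nonneg_left (Real.abs_cos_le_one _) (by positivity)
    _ = μ0 / K := mul_one _
  -- the antiderivative
  set g : ℝ → ℝ := fun z =>
    F z * Real.sin (K * (z + h)) / K + F1 z * Real.cos (K * (z + h)) / K ^ 2 with hg_def
  set φ : ℝ → ℝ := fun z =>
    F z * Real.cos (K * (z + h)) + F2 z * Real.cos (K * (z + h)) / K ^ 2 with hφ_def
  have hgd : ∀ x ∈ Set.Ioo (-h) η, HasDerivAt g (φ x) x := by
    intro x hx
    have hxs : x ∈ s := Set.mem_Icc.2 ⟨hx.1.le, hx.2.le⟩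
    have hmem : s ∈ nhds x := Icc_mem_nhds hx.1 hx.2
    have hFx : HasDerivAt F (F1 x) x := (hdF x hxs).hasDerivAt hmem
    have hF1x : HasDerivAt F1 (F2 x) x := (hdF1 x hxs).hasDerivAt hmem
    have hlin : HasDerivAt (fun z : ℝ => K * (z + h)) K x := by
      simpa using ((hasDerivAt_id x).add_const h).const_mul K
    have hsin' : HasDerivAt (fun z => Real.sin (K * (z + h)))
        (Real.cos (K * (x + h)) * K) x :=
      by have := (Real.hasDerivAt_sin (K * (x + h))).comp x hlin; exact this
    have hcos' : HasDerivAt (fun z => Real.cos (K * (z + h)))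
        (-Real.sin (K * (x + h)) * K) x :=
      by have := (Real.hasDerivAt_cos (K * (x + h))).comp x hlin; exact this
    have hsum := ((hFx.mul hsin').div_const K).add ((hF1x.mul hcos').div_const (K ^ 2))
    refine hsum.congr_deriv ?_
    have hK0 : K ≠ 0 := hKpos.ne'
    rw [hφ_def]; field_simp
    ring_nf
  have hlinc : Continuous fun z : ℝ => K * (z + h) :=
    continuous_const.mul (continuous_id.add continuous_const)
  have hgc : ContinuousOn g s := by
    apply ContinuousOn.add
    · exact (hFcont.mul ((Real.continuous_sin.comp hlinc).continuousOn)).div_const _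
    · exact (hF1cont.mul ((Real.continuous_cos.comp hlinc).continuousOn)).div_const _
  have hint1 : IntervalIntegrable (fun z => F z * Real.cos (K * (z + h)))
      volume (-h) η := by
    apply ContinuousOn.intervalIntegrable
    rw [huIcc]
    exact hFcont.mul ((Real.continuous_cos.comp hlinc).continuousOn)
  have hint2 : IntervalIntegrable (fun z => F2 z * Real.cos (K * (z + h)) / K ^ 2)
      volume (-h) η := by
    apply ContinuousOn.intervalIntegrable
    rw [huIcc]
    exact (hF2cont.mul ((Real.continuous_cos.comp hlinc).continuousOn)).div_const _
  have hφint : IntervalIntegrable φ volume (-h) η := hint1.add hint2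
  have hFTC : ∫ z in (-h)..η, φ z = g η - g (-h) :=
    intervalIntegral.integral_eq_sub_of_hasDeriv_right_of_le hle hgc
      (fun x hx => (hgd x hx).hasDerivWithinAt) hφint
  have hsplit : (∫ z in (-h)..η, φ z) =
      (∫ z in (-h)..η, F z * Real.cos (K * (z + h))) +
      ∫ z in (-h)..η, F2 z * Real.cos (K * (z + h)) / K ^ 2 :=
    intervalIntegral.integral_add hint1 hint2
  have hmain : (∫ z in (-h)..η, F z * Real.cos (K * (z + h))) =
      g η - g (-h) - ∫ z in (-h)..η, F2 z * Real.cos (K * (z + h)) / K ^ 2 := by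
    rw [← hFTC, hsplit]; ring
  -- bounds on the three pieces
  have hgη : |g η| ≤ μ0 * |F η| / K ^ 2 + |F1 η| / K ^ 2 := by
    have hηH : η + h = H := hηh
    rw [hg_def]
    simp only [hηH]
    refine (abs_add_le _ _).trans ?_
    apply add_le_add
    · rw [abs_div, abs_mul, abs_of_pos hKpos]
      calc |F η| * |Real.sin (K * H)| / K ≤ |F η| * (μ0 / K) / K := by
            gcongr
      _ = μ0 * |F η| / K ^ 2 := by field_simp
    · rw [abs_div, abs_mul, abs_of_pos (pow_pos hKpos 2)]
      calc |F1 η| * |Real.cos (K * H)| / K ^ 2 ≤ |F1 η| * 1 / K ^ 2 := by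
            gcongr
            exact Real.abs_cos_le_one _
      _ = |F1 η| / K ^ 2 := by rw [mul_one]
  have hgmh : |g (-h)| = |F1 (-h)| / K ^ 2 := by
    rw [hg_def]
    simp only [neg_add_cancel, mul_zero, Real.sin_zero, Real.cos_zero, mul_one]
    rw [zero_div, zero_add, abs_div, abs_of_pos (pow_pos hKpos 2)]
  have hintF2 : |∫ z in (-h)..η, F2 z * Real.cos (K * (z + h)) / K ^ 2| ≤
      M' * H / K ^ 2 := by
    have hb : ∀ x ∈ Set.uIoc (-h) η,
        ‖F2 x * Real.cos (K * (x + h)) / K ^ 2‖ ≤ M' / K ^ 2 := by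
      intro x hx
      have hxs : x ∈ s := by
        rw [Set.uIoc_of_le hle] at hx
        exact Set.mem_Icc.2 ⟨hx.1.le, hx.2⟩
      rw [Real.norm_eq_abs, abs_div, abs_mul, abs_of_pos (pow_pos hKpos 2)]
      calc |F2 x| * |Real.cos (K * (x + h))| / K ^ 2 ≤ M' * 1 / K ^ 2 := by
            gcongr
            · exact hM' x hxs
            · exact Real.abs_cos_le_one _
      _ = M' / K ^ 2 := by rw [mul_one]
    have := intervalIntegral.norm_integral_le_of_norm_le_const hb
    rw [Real.norm_eq_abs] at this
    have habsH : |η - -h| = H := by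
      rw [abs_of_pos (by linarith : (0:ℝ) < η - -h)]; linarith
    rw [habsH] at this
    calc |∫ z in (-h)..η, F2 z * Real.cos (K * (z + h)) / K ^ 2| ≤ M' / K ^ 2 * H := this
    _ = M' * H / K ^ 2 := by ring
  have hFcos : |∫ z in (-h)..η, F z * Real.cos (K * (z + h))| ≤ B / K ^ 2 := by
    rw [hmain]
    calc |g η - g (-h) - ∫ z in (-h)..η, F2 z * Real.cos (K * (z + h)) / K ^ 2| ≤
        |g η| + |g (-h)| + |∫ z in (-h)..η, F2 z * Real.cos (K * (z + h)) / K ^ 2| := by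
          have := abs_sub (g η - g (-h)) (∫ z in (-h)..η, F2 z * Real.cos (K * (z + h)) / K ^ 2)
          have h2 := abs_sub (g η) (g (-h))
          calc |g η - g (-h) - ∫ z in (-h)..η, F2 z * Real.cos (K * (z + h)) / K ^ 2| ≤
              |g η - g (-h)| + |∫ z in (-h)..η, F2 z * Real.cos (K * (z + h)) / K ^ 2| :=
                abs_sub _ _
          _ ≤ _ := by
                apply add_le_add_left (abs_sub _ _)
    _ ≤ (μ0 * |F η| / K ^ 2 + |F1 η| / K ^ 2) + |F1 (-h)| / K ^ 2 + M' * H / K ^ 2 := by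
          rw [hgmh] at *
          exact add_le_add (add_le_add hgη le_rfl) hintF2
    _ = B / K ^ 2 := by rw [hB_def]; ring
  -- relate target integral
  have htarget : (∫ z in (-h)..η, F z * (Real.cos (K * (z + h)) / Real.cos (K * H))) =
      (∫ z in (-h)..η, F z * Real.cos (K * (z + h))) / Real.cos (K * H) := by
    rw [← intervalIntegral.integral_div]
    congr 1
    ext z
    ring
  rw [htarget, abs_div]
  have hcKpos : 0 < |Real.cos (K * H)| := abs_pos.2 hcK
  have hstep1 : |∫ z in (-h)..η, F z * Real.cos (K * (z + h))| / |Real.cos (K * H)| ≤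
      (B / K ^ 2) * A := by
    have h1 : |∫ z in (-h)..η, F z * Real.cos (K * (z + h))| / |Real.cos (K * H)| =
        |∫ z in (-h)..η, F z * Real.cos (K * (z + h))| * |1 / Real.cos (K * H)| := by
      rw [abs_div, abs_one]; ring
    rw [h1]
    apply mul_le_mul hFcos hAbound (abs_nonneg _) (by positivity)
  have hK2n : 1 / K ^ 2 ≤ (2 * H / π) ^ 2 / (n : ℝ) ^ 2 := by
    have hKn' : (n : ℝ) * (π / (2 * H)) ≤ K := hKn
    have hnπ : 0 < (n : ℝ) * (π / (2 * H)) := by positivity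
    have hsq : ((n : ℝ) * (π / (2 * H))) ^ 2 ≤ K ^ 2 := by nlinarith
    rw [div_le_div_iff₀ (by positivity) (by positivity)]
    calc 1 * (n : ℝ) ^ 2 = ((n : ℝ) * (π / (2 * H))) ^ 2 * (2 * H / π) ^ 2 := by
          field_simp
    _ ≤ K ^ 2 * (2 * H / π) ^ 2 := by
          apply mul_le_mul_of_nonneg_right hsq (sq_nonneg _)
    _ = (2 * H / π) ^ 2 * K ^ 2 := by ring
  calc |∫ z in (-h)..η, F z * Real.cos (K * (z + h))| / |Real.cos (K * H)| ≤
      (B / K ^ 2) * A := hstep1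
  _ = (A * B) * (1 / K ^ 2) := by ring
  _ ≤ (A * B) * ((2 * H / π) ^ 2 / (n : ℝ) ^ 2) := by
        apply mul_le_mul_of_nonneg_left hK2n (mul_nonneg hA0 hB0)
  _ = (A * B) * (2 * H / π) ^ 2 / (n : ℝ) ^ 2 := by ring
  _ ≤ C / (n : ℝ) ^ 2 := by
        apply div_le_div_of_nonneg_right ?_ (by positivity)
        rw [hC_def]
        nlinarith [sq_nonneg (2 * H / π), mul_nonneg hA0 hB0]
end

section
/- Fix real constants μ0 > 0 and H > 0, and real numbers h, η with η + h = H. For n ≥ 1 let k_n be the unique solution k of μ0 + k·tan(k·H) = 0 in ((2n−1)π/(2H), nπ/H), and set W_n(z) = sin(k_n(z+h))/cos(k_n H) on [−h, η]. Then for every twice continuously differentiable function F : [−h, η] → ℝ there exists a constant C > 0 (depending on F, μ0, H but not on n) such that |∫_{−h}^{η} F(z)·W_n(z) dz| ≤ C·n^{−1} for all n ≥ 1. -/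
open Real MeasureTheory intervalIntegral

set_option maxHeartbeats 1000000

/-- Assertion (ii) of Lemma 2 (Eq. (4.8b)): for any C² function `F` on `[−h, η]`,
`|∫ F·Wₙ| ≤ C·n⁻¹`, where `Wₙ(z) = sin(kₙ(z+h))/cos(kₙH)`. -/
theorem integral_against_Wn_decay (μ0 H h η : ℝ) (hμ0 : 0 < μ0) (hH : 0 < H)
    (hηh : η + h = H)
    (k : ℕ → ℝ)
    (hk : ∀ n : ℕ, 1 ≤ n →
      k n ∈ Set.Ioo ((2 * (n : ℝ) - 1) * π / (2 * H)) ((n : ℝ) * π / H) ∧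
      μ0 + k n * Real.tan (k n * H) = 0)
    (F : ℝ → ℝ) (hF : ContDiffOn ℝ 2 F (Set.Icc (-h) η)) :
    ∃ C : ℝ, 0 < C ∧ ∀ n : ℕ, 1 ≤ n →
      |∫ z in (-h)..η, F z * (Real.sin (k n * (z + h)) / Real.cos (k n * H))| ≤
        C / (n : ℝ) := by
  have hle : -h < η := by linarith
  set s : Set ℝ := Set.Icc (-h) η with hs
  have hsc : IsCompact s := isCompact_Icc
  have huD : UniqueDiffOn ℝ s := uniqueDiffOn_Icc hle
  have hFc : ContinuousOn F s := hF.continuousOn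
  set F' : ℝ → ℝ := derivWithin F s with hF'def
  have hF'c : ContinuousOn F' s := hF.continuousOn_derivWithin huD one_le_two
  obtain ⟨C1, hC1⟩ := hsc.exists_bound_of_continuousOn hFc
  obtain ⟨C2, hC2⟩ := hsc.exists_bound_of_continuousOn hF'c
  have hmem : (-h) ∈ s := ⟨le_refl _, hle.le⟩
  have hC1n : 0 ≤ C1 := le_trans (norm_nonneg _) (hC1 _ hmem)
  have hC2n : 0 ≤ C2 := le_trans (norm_nonneg _) (hC2 _ hmem)
  have hπ : (0:ℝ) < π := Real.pi_pos
  -- lower bound for |cos (k n * H)|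
  set c0 : ℝ := 1 / (1 + (2 * μ0 * H / π) ^ 2) with hc0
  have hc0pos : 0 < c0 := by positivity
  set cb : ℝ := Real.sqrt c0 with hcb
  have hcbpos : 0 < cb := Real.sqrt_pos.mpr hc0pos
  set M : ℝ := 2 * C1 + C2 * H + 1 with hM
  have hMpos : 0 < M := by positivity
  refine ⟨M * (2 * H) / (π * cb), by positivity, ?_⟩
  intro n hn
  obtain ⟨⟨hklb, hkub⟩, heq⟩ := hk n hn
  have hn1 : (1:ℝ) ≤ (n:ℝ) := by exact_mod_cast hn
  have hklow : (n:ℝ) * π / (2 * H) ≤ k n := by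
    refine le_trans ?_ hklb.le
    apply div_le_div_of_nonneg_right ?_ (by positivity)
    nlinarith
  have hkpos : 0 < k n := lt_of_lt_of_le (by positivity) hklow
  -- cos (k n * H) ≠ 0
  have hcosne : Real.cos (k n * H) ≠ 0 := by
    intro h0
    rw [Real.tan_eq_sin_div_cos, h0, div_zero, mul_zero, add_zero] at heq
    exact absurd heq hμ0.ne'
  -- tan value
  have htan : Real.tan (k n * H) = -μ0 / k n := by
    field_simp
    linarith
  have hsin : Real.sin (k n * H) = Real.tan (k n * H) * Real.cos (k n * H) := by
    rw [Real.tan_eq_sin_div_cos]; field_simp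
  have hpyth := Real.sin_sq_add_cos_sq (k n * H)
  have hcos2 : Real.cos (k n * H) ^ 2 * (1 + Real.tan (k n * H) ^ 2) = 1 := by
    linear_combination hpyth - (Real.sin (k n * H) + Real.tan (k n * H) * Real.cos (k n * H)) * hsin
  -- tan² bound
  have hklow1 : π / (2 * H) ≤ k n := by
    refine le_trans ?_ hklow
    apply div_le_div_of_nonneg_right ?_ (by positivity)
    nlinarith
  have hπk : π ≤ k n * (2 * H) := (div_le_iff₀ (by positivity)).mp hklow1
  have htan2 : Real.tan (k n * H) ^ 2 ≤ (2 * μ0 * H / π) ^ 2 := by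
    rw [htan,
        show (-μ0 / k n) ^ 2 = μ0 ^ 2 / (k n) ^ 2 by ring,
        show (2 * μ0 * H / π) ^ 2 = (2 * μ0 * H) ^ 2 / π ^ 2 by ring,
        div_le_div_iff₀ (by positivity) (by positivity)]
    have h2 := pow_le_pow_left₀ hπ.le hπk 2
    nlinarith [sq_nonneg μ0, h2]
  have hcoslb : cb ≤ |Real.cos (k n * H)| := by
    rw [← Real.sqrt_sq_eq_abs]
    apply Real.sqrt_le_sqrt
    rw [hc0, div_le_iff₀ (by positivity)]
    nlinarith [hcos2, htan2, sq_nonneg (Real.cos (k n * H))]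
  -- integration by parts
  set K : ℝ := k n with hK
  set v : ℝ → ℝ := fun z => -Real.cos (K * (z + h)) / K with hv
  have hvd : ∀ z : ℝ, HasDerivAt v (Real.sin (K * (z + h))) z := by
    intro z
    have h1 : HasDerivAt (fun z : ℝ => K * (z + h)) K z := by
      simpa using ((hasDerivAt_id z).add_const h).const_mul K
    have h2 : HasDerivAt (fun z : ℝ => Real.cos (K * (z + h)))
        (-Real.sin (K * (z + h)) * K) z := (Real.hasDerivAt_cos _).comp z h1
    have h3 := (h2.neg).div_const K
    have hK0 : K ≠ 0 := hkpos.ne'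
    rw [show Real.sin (K * (z + h)) = -(-Real.sin (K * (z + h)) * K) / K by field_simp]
    exact h3
  have huIcc : Set.uIcc (-h) η = s := Set.uIcc_of_le hle.le
  have hFd : ∀ x ∈ Set.uIcc (-h) η, HasDerivWithinAt F (F' x) (Set.uIcc (-h) η) x := by
    intro x hx
    rw [huIcc] at hx ⊢
    exact ((hF.differentiableOn two_ne_zero) x hx).hasDerivWithinAt
  have hvd' : ∀ x ∈ Set.uIcc (-h) η, HasDerivWithinAt v (Real.sin (K * (x + h)))
      (Set.uIcc (-h) η) x := fun x _ => (hvd x).hasDerivWithinAt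
  have hF'int : IntervalIntegrable F' volume (-h) η := by
    apply ContinuousOn.intervalIntegrable
    rwa [huIcc]
  have hsinint : IntervalIntegrable (fun z => Real.sin (K * (z + h))) volume (-h) η :=
    (Continuous.continuousOn (by continuity)).intervalIntegrable
  have hparts := intervalIntegral.integral_mul_deriv_eq_deriv_mul_of_hasDerivWithinAt
    hFd hvd' hF'int hsinint
  -- bound |v z| ≤ 1/K
  have hvbd : ∀ z : ℝ, |v z| ≤ K⁻¹ := by
    intro z
    rw [hv]
    simp only [abs_div, abs_neg]
    rw [abs_of_pos hkpos]
    rw [div_le_iff₀ hkpos, inv_mul_cancel₀ hkpos.ne']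
    exact Real.abs_cos_le_one _
  -- bound the remainder integral
  have hrem : |∫ z in (-h)..η, F' z * v z| ≤ C2 * K⁻¹ * H := by
    have := intervalIntegral.norm_integral_le_of_norm_le_const
      (C := C2 * K⁻¹) (f := fun z => F' z * v z) (a := -h) (b := η) ?_
    · rw [Real.norm_eq_abs] at this
      calc |∫ z in (-h)..η, F' z * v z| ≤ C2 * K⁻¹ * |η - (-h)| := this
        _ = C2 * K⁻¹ * H := by rw [show η - (-h) = H by linarith, abs_of_pos hH]
    · intro x hx
      have hx' : x ∈ s := by
        rw [Set.uIoc_of_le hle.le] at hx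
        exact ⟨hx.1.le, hx.2⟩
      rw [Real.norm_eq_abs, abs_mul]
      have h1 : |F' x| ≤ C2 := hC2 x hx'
      have h2 : |v x| ≤ K⁻¹ := hvbd x
      exact mul_le_mul h1 h2 (abs_nonneg _) hC2n
  -- bound the main integral
  have hI : |∫ z in (-h)..η, F z * Real.sin (K * (z + h))| ≤ (2 * C1 + C2 * H) * K⁻¹ := by
    rw [hparts]
    have b1 : |F η * v η| ≤ C1 * K⁻¹ := by
      rw [abs_mul]
      exact mul_le_mul (hC1 η ⟨hle.le, le_refl _⟩) (hvbd η) (abs_nonneg _) hC1n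
    have b2 : |F (-h) * v (-h)| ≤ C1 * K⁻¹ := by
      rw [abs_mul]
      exact mul_le_mul (hC1 _ hmem) (hvbd _) (abs_nonneg _) hC1n
    calc |F η * v η - F (-h) * v (-h) - ∫ z in (-h)..η, F' z * v z|
        ≤ |F η * v η| + |F (-h) * v (-h)| + |∫ z in (-h)..η, F' z * v z| := by
          exact (abs_sub _ _).trans (by gcongr; exact abs_sub _ _)
      _ ≤ C1 * K⁻¹ + C1 * K⁻¹ + C2 * K⁻¹ * H := by gcongr
      _ = (2 * C1 + C2 * H) * K⁻¹ := by ring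
  -- put it together
  have hsplit : (∫ z in (-h)..η, F z * (Real.sin (K * (z + h)) / Real.cos (K * H)))
      = (∫ z in (-h)..η, F z * Real.sin (K * (z + h))) / Real.cos (K * H) := by
    rw [← intervalIntegral.integral_div]
    congr 1; ext z; ring
  rw [hsplit, abs_div]
  have hnpos : (0:ℝ) < n := by exact_mod_cast hn
  have hKinv : K⁻¹ ≤ 2 * H / ((n:ℝ) * π) := by
    rw [show (2 * H / ((n:ℝ) * π)) = ((n:ℝ) * π / (2 * H))⁻¹ by rw [inv_div]]
    exact inv_anti₀ (by positivity) hklow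
  calc |∫ z in (-h)..η, F z * Real.sin (K * (z + h))| / |Real.cos (K * H)|
      ≤ (M * K⁻¹) / cb := by
        apply div_le_div₀ (by positivity) ?_ hcbpos hcoslb
        calc |∫ z in (-h)..η, F z * Real.sin (K * (z + h))| ≤ (2 * C1 + C2 * H) * K⁻¹ := hI
          _ ≤ M * K⁻¹ := by
              apply mul_le_mul_of_nonneg_right _ (by positivity)
              rw [hM]; linarith
    _ ≤ (M * (2 * H / ((n:ℝ) * π))) / cb := by gcongr
    _ = M * (2 * H) / (π * cb) / (n:ℝ) := by field_simp
end
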